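/- Let H be a connected bipartite graph of order n₂ and let G be a connected graph with at least two vertices, of order n₁, having t₁ true twin equivalence classes. If dim_l(G) = n₁ − t₁ and the diameter of G satisfies D(G) < r(H), where r(H) is the radius of H, then dim_l(G ⊠ H) = n₂(n₁ − t₁). -/

import Mathlib

open SimpleGraph

/-- The strong product of two simple graphs. -/
def strongProd {α β : Type*} (G : SimpleGraph α) (H : SimpleGraph β) :
    SimpleGraph (α × β) where
  Adj x y := (x.1 = y.1 ∧ H.Adj x.2 y.2) ∨ (x.2 = y.2 ∧ G.Adj x.1 y.1) ∨
      (G.Adj x.1 y.1 ∧ H.Adj x.2 y.2)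
  symm := by
    constructor
    rintro x y (⟨h1, h2⟩ | ⟨h1, h2⟩ | ⟨h1, h2⟩)
    · exact Or.inl ⟨h1.symm, h2.symm⟩
    · exact Or.inr (Or.inl ⟨h1.symm, h2.symm⟩)
    · exact Or.inr (Or.inr ⟨h1.symm, h2.symm⟩)
  loopless := by
    constructor
    rintro x (⟨_, h⟩ | ⟨_, h⟩ | ⟨h, _⟩)
    · exact H.irrefl h
    · exact G.irrefl h
    · exact G.irrefl h

/-- A set `S` is a local metric generator for `G` if every pair of adjacent
vertices is distinguished by some element of `S`. -/
def IsLocalMetricGenerator {α : Type*} (G : SimpleGraph α) (S : Set α) : Prop :=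
  ∀ u v : α, G.Adj u v → ∃ s ∈ S, G.dist u s ≠ G.dist v s

/-- The local metric dimension of a graph. -/
noncomputable def localMetricDim {α : Type*} [Fintype α] (G : SimpleGraph α) : ℕ :=
  sInf {n | ∃ S : Finset α, S.card = n ∧ IsLocalMetricGenerator G ↑S}

/-- A set `S` is a metric generator for `G` if every pair of distinct
vertices is distinguished by some element of `S`. -/
def IsMetricGenerator {α : Type*} (G : SimpleGraph α) (S : Set α) : Prop :=
  ∀ u v : α, u ≠ v → ∃ s ∈ S, G.dist u s ≠ G.dist v s

/-- The metric dimension of a graph. -/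
noncomputable def metricDim {α : Type*} [Fintype α] (G : SimpleGraph α) : ℕ :=
  sInf {n | ∃ S : Finset α, S.card = n ∧ IsMetricGenerator G ↑S}

/-- The eccentricity of a vertex: the maximum distance to another vertex. -/
noncomputable def eccentricity {α : Type*} (G : SimpleGraph α) (v : α) : ℕ :=
  sSup {d | ∃ u, G.dist v u = d}

/-- The diameter of a graph: maximum eccentricity. -/
noncomputable def graphDiam {α : Type*} (G : SimpleGraph α) : ℕ :=
  sSup {d | ∃ v, eccentricity G v = d}

/-- The radius of a graph: minimum eccentricity. -/
noncomputable def graphRadius {α : Type*} (G : SimpleGraph α) : ℕ :=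
  sInf {d | ∃ v, eccentricity G v = d}

/-- The interval `I[x,y]`: vertices lying on some shortest `x`–`y` path. -/
def interval {α : Type*} (G : SimpleGraph α) (x y : α) : Set α :=
  {w | G.dist x w + G.dist w y = G.dist x y}

/-- A graph is adjacency `k`-resolved if for every pair of adjacent vertices
`x, y` there is a vertex `w` with `d(y,w) ≥ k` and `x ∈ I[y,w]`, or
`d(x,w) ≥ k` and `y ∈ I[x,w]`. -/
def AdjKResolved {α : Type*} (G : SimpleGraph α) (k : ℕ) : Prop :=
  ∀ x y : α, G.Adj x y →
    ∃ w : α, (k ≤ G.dist y w ∧ x ∈ interval G y w) ∨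
      (k ≤ G.dist x w ∧ y ∈ interval G x w)

/-- The true twin equivalence relation: `u ≈ v` iff `N[u] = N[v]`. -/
def trueTwinSetoid {α : Type*} (G : SimpleGraph α) : Setoid α where
  r u v := insert u (G.neighborSet u) = insert v (G.neighborSet v)
  iseqv := ⟨fun _ => rfl, Eq.symm, Eq.trans⟩

section AuxStmt10

variable {α β : Type*} {G : SimpleGraph α} {H : SimpleGraph β}

/-- Lift a walk in `H` to a walk in the strong product with fixed first coordinate. -/
def combineWalkNil (G : SimpleGraph α) (H : SimpleGraph β) (a : α) :
    ∀ {b d : β}, H.Walk b d → (strongProd G H).Walk (a, b) (a, d)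
  | _, _, .nil => .nil
  | _, _, @Walk.cons _ _ _ x _ h q =>
      Walk.cons (v := (a, x)) (Or.inl ⟨rfl, h⟩) (combineWalkNil G H a q)

theorem combineWalkNil_length (a : α) :
    ∀ {b d : β} (q : H.Walk b d), (combineWalkNil G H a q).length = q.length
  | _, _, .nil => rfl
  | _, _, @Walk.cons _ _ _ x _ h q => by
      simp [combineWalkNil, combineWalkNil_length a q]
      exact congrArg (· + 1) (combineWalkNil_length a q)

/-- Combine a walk in `G` and a walk in `H` into a walk in the strong product,
of length the max of the two lengths. -/
def combineWalk (G : SimpleGraph α) (H : SimpleGraph β) :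
    ∀ {a c : α} {b d : β}, G.Walk a c → H.Walk b d → (strongProd G H).Walk (a, b) (c, d)
  | _, _, _, _, .nil, q => combineWalkNil G H _ q
  | _, _, _, _, @Walk.cons _ _ _ x _ h p, .nil =>
      Walk.cons (v := (x, _)) (Or.inr (Or.inl ⟨rfl, h⟩)) (combineWalk G H p .nil)
  | _, _, _, _, @Walk.cons _ _ _ x _ h p, @Walk.cons _ _ _ y _ h' q =>
      Walk.cons (v := (x, y)) (Or.inr (Or.inr ⟨h, h'⟩)) (combineWalk G H p q)

theorem combineWalk_length :
    ∀ {a c : α} {b d : β} (p : G.Walk a c) (q : H.Walk b d),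
      (combineWalk G H p q).length = max p.length q.length
  | _, _, _, _, .nil, q => by
      simp [combineWalk, combineWalkNil_length]
  | _, _, _, _, @Walk.cons _ _ _ x _ h p, .nil => by
      simp [combineWalk, combineWalk_length p Walk.nil]
      change (combineWalk G H p Walk.nil).length + 1 = _
      simp [combineWalk_length p Walk.nil]
  | _, _, _, _, @Walk.cons _ _ _ x _ h p, @Walk.cons _ _ _ y _ h' q => by
      simp only [combineWalk, Walk.length_cons, combineWalk_length p q]
      change (combineWalk G H p q).length + 1 = _
      rw [combineWalk_length p q]
      omega

theorem dist_fst_le (hG : G.Connected) {x y : α × β}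
    (w : (strongProd G H).Walk x y) : G.dist x.1 y.1 ≤ w.length := by
  induction w with
  | nil => simp
  | @cons x z y h w ih =>
    rw [Walk.length_cons]
    rcases h with ⟨h1, _⟩ | ⟨_, h2⟩ | ⟨h2, _⟩
    · rw [h1]; omega
    all_goals
      calc G.dist x.1 y.1 ≤ G.dist x.1 z.1 + G.dist z.1 y.1 := hG.dist_triangle
        _ ≤ 1 + w.length := by
            have := SimpleGraph.dist_le h2.toWalk
            simp only [Walk.length_cons, Walk.length_nil] at this
            omega
        _ = w.length + 1 := by omega

theorem dist_snd_le (hH : H.Connected) {x y : α × β}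
    (w : (strongProd G H).Walk x y) : H.dist x.2 y.2 ≤ w.length := by
  induction w with
  | nil => simp
  | @cons x z y h w ih =>
    rw [Walk.length_cons]
    rcases h with ⟨_, h2⟩ | ⟨h1, _⟩ | ⟨_, h2⟩
    · calc H.dist x.2 y.2 ≤ H.dist x.2 z.2 + H.dist z.2 y.2 := hH.dist_triangle
        _ ≤ 1 + w.length := by
            have := SimpleGraph.dist_le h2.toWalk
            simp only [Walk.length_cons, Walk.length_nil] at this
            omega
        _ = w.length + 1 := by omega
    · rw [h1]; omega
    · calc H.dist x.2 y.2 ≤ H.dist x.2 z.2 + H.dist z.2 y.2 := hH.dist_triangle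
        _ ≤ 1 + w.length := by
            have := SimpleGraph.dist_le h2.toWalk
            simp only [Walk.length_cons, Walk.length_nil] at this
            omega
        _ = w.length + 1 := by omega

theorem strongProd_dist (hG : G.Connected) (hH : H.Connected)
    (a c : α) (b d : β) :
    (strongProd G H).dist (a, b) (c, d) = max (G.dist a c) (H.dist b d) := by
  obtain ⟨p, hp⟩ := hG.exists_walk_length_eq_dist a c
  obtain ⟨q, hq⟩ := hH.exists_walk_length_eq_dist b d
  refine le_antisymm ?_ ?_
  · have := SimpleGraph.dist_le (combineWalk G H p q)
    rwa [combineWalk_length, hp, hq] at this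
  · have hr : (strongProd G H).Reachable (a, b) (c, d) := ⟨combineWalk G H p q⟩
    obtain ⟨w, hw⟩ := hr.exists_walk_length_eq_dist
    have h1 := dist_fst_le (H := H) hG w
    have h2 := dist_snd_le (G := G) hH w
    simp only [hw] at h1 h2
    exact max_le h1 h2

theorem twin_dist_le (hG : G.Connected) {a₁ a₂ : α}
    (htw : insert a₁ (G.neighborSet a₁) = insert a₂ (G.neighborSet a₂))
    {w : α} (h2 : w ≠ a₂) : G.dist w a₁ ≤ G.dist w a₂ := by
  obtain ⟨p, hp⟩ := hG.exists_walk_length_eq_dist a₂ w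
  cases p with
  | nil => exact absurd rfl h2.symm
  | @cons _ x _ h q =>
    have hx : x ∈ insert a₁ (G.neighborSet a₁) := by
      rw [htw]; exact Set.mem_insert_iff.mpr (Or.inr h)
    rw [Walk.length_cons] at hp
    rcases Set.mem_insert_iff.mp hx with rfl | hadj
    · have h3 := SimpleGraph.dist_le q
      have c1 : G.dist w x = G.dist x w := SimpleGraph.dist_comm
      have c2 : G.dist w a₂ = G.dist a₂ w := SimpleGraph.dist_comm
      omega
    · have h3 := SimpleGraph.dist_le (Walk.cons (show G.Adj a₁ x from hadj) q)
      rw [Walk.length_cons] at h3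
      have c1 : G.dist w a₁ = G.dist a₁ w := SimpleGraph.dist_comm
      have c2 : G.dist w a₂ = G.dist a₂ w := SimpleGraph.dist_comm
      omega

theorem twin_dist (hG : G.Connected) {a₁ a₂ : α}
    (htw : insert a₁ (G.neighborSet a₁) = insert a₂ (G.neighborSet a₂))
    {w : α} (h1 : w ≠ a₁) (h2 : w ≠ a₂) : G.dist w a₁ = G.dist w a₂ :=
  le_antisymm (twin_dist_le hG htw h2) (twin_dist_le hG htw.symm h1)

theorem parity_walk {c : β → ZMod 2} (hc : ∀ u v : β, H.Adj u v → c v = c u + 1)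
    {u v : β} (p : H.Walk u v) : (c u : ZMod 2) + (p.length : ZMod 2) = c v := by
  induction p with
  | nil => simp
  | @cons u x v h q ih =>
    rw [Walk.length_cons]
    push_cast
    rw [← ih, hc u x h]
    ring

theorem parity_dist_ne (hH : H.Connected) (hbip : H.Colorable 2)
    {b d : β} (hadj : H.Adj b d) (h : β) : H.dist b h ≠ H.dist d h := by
  obtain ⟨C⟩ := hbip
  set c : β → ZMod 2 := fun v => ((C v : Fin 2) : ZMod 2) with hcdef
  have hc : ∀ u v : β, H.Adj u v → c v = c u + 1 := by
    intro u v huv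
    have hne : C u ≠ C v := C.valid huv
    have : ∀ x y : Fin 2, x ≠ y → ((y : ZMod 2) = (x : ZMod 2) + 1) := by decide
    exact this _ _ hne
  obtain ⟨p, hp⟩ := hH.exists_walk_length_eq_dist b h
  obtain ⟨q, hq⟩ := hH.exists_walk_length_eq_dist d h
  intro heq
  have e1 := parity_walk (H := H) hc p
  have e2 := parity_walk (H := H) hc q
  rw [hp] at e1
  rw [hq] at e2
  rw [← heq] at e2
  have : c b = c d := by
    have := e1.trans e2.symm
    exact add_right_cancel this
  rw [hc b d hadj] at this
  simpa using this.symm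

theorem ecc_exists [Fintype β] (H : SimpleGraph β) (b : β) :
    ∃ h : β, H.dist b h = eccentricity H b := by
  have hset : {d | ∃ u, H.dist b u = d} = Set.range (H.dist b) := by
    ext d; simp [Set.mem_range]
  have hne : {d | ∃ u, H.dist b u = d}.Nonempty := ⟨0, ⟨b, SimpleGraph.dist_self⟩⟩
  have hbdd : BddAbove {d | ∃ u, H.dist b u = d} := by
    rw [hset]; exact (Set.finite_range _).bddAbove
  have : eccentricity H b ∈ {d | ∃ u, H.dist b u = d} := Nat.sSup_mem hne hbdd
  exact this

theorem radius_le_ecc (H : SimpleGraph β) (b : β) :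
    graphRadius H ≤ eccentricity H b :=
  Nat.sInf_le ⟨b, rfl⟩

theorem dist_le_diam [Fintype α] (G : SimpleGraph α) (a w : α) :
    G.dist a w ≤ graphDiam G := by
  have h1 : G.dist a w ≤ eccentricity G a := by
    apply le_csSup
    · have hset : {d | ∃ u, G.dist a u = d} = Set.range (G.dist a) := by
        ext d; simp [Set.mem_range]
      rw [hset]
      exact (Set.finite_range _).bddAbove
    · exact ⟨w, rfl⟩
  refine h1.trans ?_
  apply le_csSup
  · have hset : {d | ∃ v, eccentricity G v = d} = Set.range (eccentricity G) := by
      ext d; simp [Set.mem_range]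
    rw [hset]
    exact (Set.finite_range _).bddAbove
  · exact ⟨a, rfl⟩

theorem exists_min_localGen [Fintype α] (G : SimpleGraph α) (hG : G.Connected) :
    ∃ S : Finset α, S.card = localMetricDim G ∧ IsLocalMetricGenerator G ↑S := by
  have hne : {n | ∃ S : Finset α, S.card = n ∧ IsLocalMetricGenerator G ↑S}.Nonempty := by
    refine ⟨(Finset.univ : Finset α).card, Finset.univ, rfl, ?_⟩
    intro u v huv
    refine ⟨u, by simp, ?_⟩
    rw [SimpleGraph.dist_self]
    have : 0 < G.dist v u := (hG v u).pos_dist_of_ne huv.ne'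
    omega
  have := Nat.sInf_mem hne
  obtain ⟨S, hS1, hS2⟩ := this
  exact ⟨S, hS1, hS2⟩

end AuxStmt10

/-- if `H` is bipartite, `dim_l(G) = n₁ − t₁` and `D(G) < r(H)`,
then `dim_l(G ⊠ H) = n₂(n₁ − t₁)`. -/
theorem stmt10 {α β : Type*} [Fintype α] [Fintype β]
    (G : SimpleGraph α) (H : SimpleGraph β)
    (hH : H.Connected) (hbip : H.Colorable 2)
    (hG : G.Connected) (hn1 : 2 ≤ Fintype.card α)
    (t1 : ℕ) (ht1 : Nat.card (Quotient (trueTwinSetoid G)) = t1)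
    (hdimG : localMetricDim G = Fintype.card α - t1)
    (hD : graphDiam G < graphRadius H) :
    localMetricDim (strongProd G H) =
      Fintype.card β * (Fintype.card α - t1) := by
  classical
  obtain ⟨W, hWcard, hWgen⟩ := exists_min_localGen G hG
  rw [hdimG] at hWcard
  have hedge : ∃ u v : α, G.Adj u v := by
    obtain ⟨u, v, huv⟩ := Fintype.exists_pair_of_one_lt_card (α := α) (by omega)
    obtain ⟨p, hp⟩ := hG.exists_walk_length_eq_dist u v
    cases p with
    | nil => exact absurd rfl huv
    | cons h q => exact ⟨_, _, h⟩
  have hWne : W.Nonempty := by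
    rcases W.eq_empty_or_nonempty with rfl | h
    · obtain ⟨u, v, huv⟩ := hedge
      obtain ⟨s, hs, _⟩ := hWgen u v huv
      simp at hs
    · exact h
  have hdist := strongProd_dist (G := G) (H := H) hG hH
  -- upper bound generator
  have hgenUB : IsLocalMetricGenerator (strongProd G H)
      ↑(W ×ˢ (Finset.univ : Finset β)) := by
    rintro ⟨a, b⟩ ⟨c, d⟩ hadj
    rcases hadj with ⟨h1, h2⟩ | ⟨h1, h2⟩ | ⟨h2, h3⟩
    · -- a = c, b ~ d
      simp only at h1 h2
      subst h1
      obtain ⟨w, hw⟩ := hWne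
      obtain ⟨h, hh⟩ := ecc_exists H b
      have hrh : graphRadius H ≤ H.dist b h := hh ▸ radius_le_ecc H b
      have hDa : G.dist a w ≤ graphDiam G := dist_le_diam G a w
      have htri : H.dist b h ≤ H.dist b d + H.dist d h := hH.dist_triangle
      have hbd : H.dist b d = 1 := SimpleGraph.dist_eq_one_iff_adj.mpr h2
      have hne := parity_dist_ne hH hbip h2 h
      refine ⟨(w, h), by simp [hw], ?_⟩
      rw [hdist a w b h, hdist a w d h]
      have e1 : max (G.dist a w) (H.dist b h) = H.dist b h := max_eq_right (by omega)
      have e2 : max (G.dist a w) (H.dist d h) = H.dist d h := max_eq_right (by omega)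
      rw [e1, e2]
      exact hne
    · -- b = d, a ~ c
      simp only at h1 h2
      subst h1
      obtain ⟨w, hwW, hw⟩ := hWgen a c h2
      refine ⟨(w, b), by simp [hwW], ?_⟩
      rw [hdist a w b b, hdist c w b b, SimpleGraph.dist_self]
      simpa using hw
    · -- a ~ c, b ~ d
      simp only at h2 h3
      obtain ⟨w, hwW, hw⟩ := hWgen a c h2
      have hac : G.dist a c = 1 := SimpleGraph.dist_eq_one_iff_adj.mpr h2
      have hbd : H.dist b d = 1 := SimpleGraph.dist_eq_one_iff_adj.mpr h3
      by_cases hcw : G.dist c w = 0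
      · have hcweq : c = w := hG.dist_eq_zero_iff.mp hcw
        subst hcweq
        refine ⟨(c, d), by simp [hwW], ?_⟩
        rw [hdist a c b d, hdist c c d d, SimpleGraph.dist_self, SimpleGraph.dist_self,
          hac, hbd]
        simp
      · by_cases haw : G.dist a w = 0
        · have haweq : a = w := hG.dist_eq_zero_iff.mp haw
          subst haweq
          have hca : G.dist c a = 1 := SimpleGraph.dist_eq_one_iff_adj.mpr h2.symm
          have hdb : H.dist d b = 1 := SimpleGraph.dist_eq_one_iff_adj.mpr h3.symm
          refine ⟨(a, b), by simp [hwW], ?_⟩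
          rw [hdist a a b b, hdist c a d b, SimpleGraph.dist_self, SimpleGraph.dist_self,
            hca, hdb]
          simp
        · have hdb : H.dist d b = 1 := SimpleGraph.dist_eq_one_iff_adj.mpr h3.symm
          refine ⟨(w, b), by simp [hwW], ?_⟩
          rw [hdist a w b b, hdist c w d b, SimpleGraph.dist_self, hdb]
          omega
  have hUBcard : (W ×ˢ (Finset.univ : Finset β)).card =
      Fintype.card β * (Fintype.card α - t1) := by
    rw [Finset.card_product, Finset.card_univ, hWcard, mul_comm]
  -- lower bound
  have key : ∀ S : Finset (α × β), IsLocalMetricGenerator (strongProd G H) ↑S →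
      Fintype.card β * (Fintype.card α - t1) ≤ S.card := by
    intro S hS
    have hfib : S.card = ∑ b : β, (S.filter fun x => x.2 = b).card :=
      Finset.card_eq_sum_card_fiberwise (fun x _ => Finset.mem_univ x.2)
    have hperb : ∀ b : β, Fintype.card α - t1 ≤ (S.filter fun x => x.2 = b).card := by
      intro b
      set T : Finset α := Finset.univ.filter (fun a => (a, b) ∉ S) with hTdef
      have hTcard : T.card ≤ t1 := by
        have hinj : Function.Injective
            (fun a : {x // x ∈ T} => Quotient.mk (trueTwinSetoid G) a.1) := by
          rintro ⟨a₁, ha₁⟩ ⟨a₂, ha₂⟩ heq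
          simp only at heq
          by_contra hne'
          have hne : a₁ ≠ a₂ := fun hcc => hne' (by simpa using hcc)
          have htw : insert a₁ (G.neighborSet a₁) = insert a₂ (G.neighborSet a₂) :=
            Quotient.exact heq
          have hmem1 : (a₁, b) ∉ S := by
            have := ha₁; rw [hTdef, Finset.mem_filter] at this; exact this.2
          have hmem2 : (a₂, b) ∉ S := by
            have := ha₂; rw [hTdef, Finset.mem_filter] at this; exact this.2
          have hadj21 : G.Adj a₂ a₁ := by
            have h0 : a₁ ∈ insert a₂ (G.neighborSet a₂) := by
              rw [← htw]; exact Set.mem_insert _ _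
            rcases Set.mem_insert_iff.mp h0 with h0 | h0
            · exact absurd h0 hne
            · exact h0
          obtain ⟨⟨w, h⟩, hmemS, hd⟩ := hS (a₁, b) (a₂, b)
            (Or.inr (Or.inl ⟨rfl, hadj21.symm⟩))
          apply hd
          rw [hdist a₁ w b h, hdist a₂ w b h]
          by_cases hw1 : w = a₁
          · subst hw1
            have hhb : h ≠ b := by
              rintro rfl; exact hmem1 (by exact_mod_cast hmemS)
            have hpos : 0 < H.dist b h := (hH b h).pos_dist_of_ne (Ne.symm hhb)
            have hd1 : G.dist w w = 0 := SimpleGraph.dist_self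
            have hd2 : G.dist a₂ w = 1 := SimpleGraph.dist_eq_one_iff_adj.mpr hadj21
            omega
          · by_cases hw2 : w = a₂
            · subst hw2
              have hhb : h ≠ b := by
                rintro rfl; exact hmem2 (by exact_mod_cast hmemS)
              have hpos : 0 < H.dist b h := (hH b h).pos_dist_of_ne (Ne.symm hhb)
              have hd1 : G.dist w w = 0 := SimpleGraph.dist_self
              have hd2 : G.dist a₁ w = 1 := SimpleGraph.dist_eq_one_iff_adj.mpr hadj21.symm
              omega
            · have := twin_dist hG htw hw1 hw2
              rw [SimpleGraph.dist_comm (u := w) (v := a₁), SimpleGraph.dist_comm (u := w) (v := a₂)] at this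
              rw [this]
        calc T.card = Nat.card {x // x ∈ T} := by
              rw [Nat.card_eq_fintype_card, Fintype.card_coe]
          _ ≤ Nat.card (Quotient (trueTwinSetoid G)) :=
              Nat.card_le_card_of_injective _ hinj
          _ = t1 := ht1
      have hsplit : (Finset.univ.filter (fun a => (a, b) ∈ S)).card + T.card =
          Fintype.card α := by
        rw [hTdef]
        rw [Finset.card_filter_add_card_filter_not, Finset.card_univ]
      have hinj2 : (Finset.univ.filter fun a => (a, b) ∈ S).card ≤
          (S.filter fun x => x.2 = b).card := by
        apply Finset.card_le_card_of_injOn (fun a => (a, b))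
        · intro a ha
          rw [Finset.mem_coe, Finset.mem_filter] at ha ⊢
          exact ⟨ha.2, rfl⟩
        · intro a _ a' _ h
          exact congrArg Prod.fst h
      omega
    calc Fintype.card β * (Fintype.card α - t1)
        = ∑ _b : β, (Fintype.card α - t1) := by
          rw [Finset.sum_const, Finset.card_univ, smul_eq_mul]
      _ ≤ ∑ b : β, (S.filter fun x => x.2 = b).card :=
          Finset.sum_le_sum (fun b _ => hperb b)
      _ = S.card := hfib.symm
  refine le_antisymm ?_ ?_
  · unfold localMetricDim
    exact Nat.sInf_le ⟨W ×ˢ Finset.univ, hUBcard, hgenUB⟩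
  · unfold localMetricDim
    have hmem : (W ×ˢ Finset.univ).card ∈ {n | ∃ S : Finset (α × β),
        S.card = n ∧ IsLocalMetricGenerator (strongProd G H) ↑S} :=
      ⟨W ×ˢ Finset.univ, rfl, hgenUB⟩
    apply le_csInf ⟨_, hmem⟩
    rintro n ⟨S, rfl, hSgen⟩
    exact key S hSgen
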